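/- Let (X, τ) be a Hausdorff, first-countable topological space. Then the derivative topology τ⁺ is discrete: every subset of X (equivalently, every singleton) is open in τ⁺. -/

import Mathlib

open Filter Topology


/-- The derivative topology `τ⁺` of a topology `t`: the topology generated by
the `t`-open sets together with all derived sets `d_t(A)`, `A ⊆ X`. -/
def derivTopology {X : Type*} (t : TopologicalSpace X) : TopologicalSpace X :=
  TopologicalSpace.generateFrom
    ({U : Set X | @IsOpen X t U} ∪ {S : Set X | ∃ A : Set X, S = @derivedSet X t A})

lemma derivTopology_singleton_open {X : Type*} [t : TopologicalSpace X]
    [T2Space X] [FirstCountableTopology X] (x : X) :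
    @IsOpen X (derivTopology t) {x} := by
  by_cases hx : IsOpen ({x} : Set X)
  · exact TopologicalSpace.isOpen_generateFrom_of_mem (Or.inl hx)
  · have hxc : x ∈ closure ({x}ᶜ : Set X) := by
      by_contra h
      apply hx
      have hcl : closure ({x}ᶜ : Set X) = {x}ᶜ := by
        refine Set.Subset.antisymm (fun y hy => ?_) subset_closure
        simp only [Set.mem_compl_iff, Set.mem_singleton_iff]
        rintro rfl; exact h hy
      have : IsClosed ({x}ᶜ : Set X) := closure_eq_iff_isClosed.mp hcl
      simpa using this.isOpen_compl
    obtain ⟨U, hU⟩ := (𝓝 x).exists_antitone_basis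
    have ha : ∀ n : ℕ, ∃ y, y ∈ U n ∧ y ≠ x := by
      intro n
      obtain ⟨y, hy⟩ := mem_closure_iff_nhds.mp hxc (U n) (hU.mem n)
      exact ⟨y, hy.1, hy.2⟩
    choose a haU hax using ha
    set A := Set.range a with hAdef
    have hA : derivedSet A = {x} := by
      ext y
      simp only [mem_derivedSet, Set.mem_singleton_iff]
      constructor
      · intro hy
        by_contra hyx
        rw [accPt_iff_nhds] at hy
        obtain ⟨u, v, hu, hv, hyu, hxv, huv⟩ := t2_separation hyx
        obtain ⟨N, -, hUN⟩ := hU.toHasBasis.mem_iff.mp (hv.mem_nhds hxv)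
        set F : Set X := (a '' Set.Iio N) \ {y} with hFdef
        have hFfin : F.Finite := ((Set.finite_Iio N).image a).diff
        have hV' : u \ F ∈ 𝓝 y := by
          refine (hu.sdiff hFfin.isClosed).mem_nhds ⟨hyu, ?_⟩
          simp [hFdef]
        obtain ⟨z, ⟨hz1, hz2⟩, hzy⟩ := hy (u \ F) hV'
        obtain ⟨n, rfl⟩ := hz2
        rcases lt_or_ge n N with hn | hn
        · exact hz1.2 ⟨⟨n, hn, rfl⟩, hzy⟩
        · have : a n ∈ v := hUN (hU.antitone hn (haU n))
          exact (Set.disjoint_left.mp huv hz1.1) this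
      · rintro rfl
        rw [accPt_iff_nhds]
        intro V hV
        obtain ⟨n, -, hn⟩ := hU.toHasBasis.mem_iff.mp hV
        exact ⟨a n, ⟨hn (haU n), ⟨n, rfl⟩⟩, hax n⟩
    exact TopologicalSpace.isOpen_generateFrom_of_mem (Or.inr ⟨A, hA.symm⟩)

/-- If `(X, t)` is Hausdorff and first-countable, then the
derivative topology `t⁺` is discrete: every subset of `X` is `t⁺`-open. -/
theorem derivTopology_discrete_of_t2_firstCountable {X : Type*} (t : TopologicalSpace X)
    (h2 : @T2Space X t) (hfc : @FirstCountableTopology X t) :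
    ∀ s : Set X, @IsOpen X (derivTopology t) s := by
  intro s
  rw [← Set.biUnion_of_singleton s]
  exact @isOpen_biUnion X X (derivTopology t) _ _ fun x _ => derivTopology_singleton_open x
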